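/- Let l be an n-dimensional real Lie algebra with n ≥ 2 and ∇ a torsion-free bilinear product on l whose Weyl projective curvature W vanishes identically. Let s ⊆ l be a Lie subalgebra of dimension m ≥ 2 which is autoparallel, i.e. ∇_X Y ∈ s for all X, Y ∈ s. Then the intrinsic Weyl projective curvature W^s of the restricted product ∇|_s on s (defined using m in place of n and traces over s) also vanishes identically. -/
import Mathlib


set_option maxRecDepth 4000

noncomputable section

/-- The curvature `R(X,Y)Z` of a bilinear product `∇` on a Lie algebra. -/
def curv {l : Type*} [LieRing l] [LieAlgebra ℝ l]
    (nab : l →ₗ[ℝ] l →ₗ[ℝ] l) (X Y Z : l) : l :=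
  nab X (nab Y Z) - nab Y (nab X Z) - nab ⁅X, Y⁆ Z

/-- The endomorphism `Z ↦ R(Z,X)Y`. -/
def ricMap {l : Type*} [LieRing l] [LieAlgebra ℝ l]
    (nab : l →ₗ[ℝ] l →ₗ[ℝ] l) (X Y : l) : l →ₗ[ℝ] l :=
  nab.flip (nab X Y) - (nab X) ∘ₗ (nab.flip Y)
    + (nab.flip Y) ∘ₗ (LieAlgebra.ad ℝ l X)

/-- The Ricci tensor `Ric(X,Y) = tr(Z ↦ R(Z,X)Y)`. -/
def ric {l : Type*} [LieRing l] [LieAlgebra ℝ l]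
    (nab : l →ₗ[ℝ] l →ₗ[ℝ] l) (X Y : l) : ℝ :=
  LinearMap.trace ℝ l (ricMap nab X Y)

/-- The tensor `P(X,Y) = (1/(k²−1))·(k·Ric(X,Y) + Ric(Y,X))` with `k = dim l`. -/
def pT {l : Type*} [LieRing l] [LieAlgebra ℝ l]
    (nab : l →ₗ[ℝ] l →ₗ[ℝ] l) (X Y : l) : ℝ :=
  (1 / ((Module.finrank ℝ l : ℝ) ^ 2 - 1))
    * ((Module.finrank ℝ l : ℝ) * ric nab X Y + ric nab Y X)

/-- The Weyl projective curvature
`W(X,Y)Z = R(X,Y)Z + (P(X,Y) − P(Y,X))·Z − P(Y,Z)·X + P(X,Z)·Y`. -/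
def weyl {l : Type*} [LieRing l] [LieAlgebra ℝ l]
    (nab : l →ₗ[ℝ] l →ₗ[ℝ] l) (X Y Z : l) : l :=
  curv nab X Y Z + (pT nab X Y - pT nab Y X) • Z - pT nab Y Z • X + pT nab X Z • Y

-- aux lemmas
lemma ricMap_apply {l : Type*} [LieRing l] [LieAlgebra ℝ l]
    (nab : l →ₗ[ℝ] l →ₗ[ℝ] l) (X Y Z : l) :
    ricMap nab X Y Z = curv nab Z X Y := by
  have h : (⁅Z, X⁆ : l) = -⁅X, Z⁆ := by rw [← lie_skew]
  simp only [ricMap, curv, LinearMap.add_apply, LinearMap.sub_apply, LinearMap.comp_apply,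
    LinearMap.flip_apply, LieAlgebra.ad_apply, h, map_neg, LinearMap.neg_apply]
  abel

lemma trace_smulRight {M : Type*} [AddCommGroup M] [Module ℝ M] [FiniteDimensional ℝ M]
    (f : M →ₗ[ℝ] ℝ) (x : M) :
    LinearMap.trace ℝ M (f.smulRight x) = f x := by
  have h : f.smulRight x = (LinearMap.toSpanSingleton ℝ M x) ∘ₗ f := by
    ext z; simp [LinearMap.toSpanSingleton]
  rw [h, LinearMap.trace_comp_comm']
  have h2 : f ∘ₗ LinearMap.toSpanSingleton ℝ M x = (f x) • LinearMap.id := by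
    ext; simp [LinearMap.toSpanSingleton, mul_comm]
  rw [h2, map_smul, LinearMap.trace_id]
  simp

-- bilinearity of ricMap
lemma ricMap_add_left {l : Type*} [LieRing l] [LieAlgebra ℝ l]
    (nab : l →ₗ[ℝ] l →ₗ[ℝ] l) (X X' Y : l) :
    ricMap nab (X + X') Y = ricMap nab X Y + ricMap nab X' Y := by
  ext Z; simp [ricMap_apply, curv]; abel

lemma ricMap_smul_left {l : Type*} [LieRing l] [LieAlgebra ℝ l]
    (nab : l →ₗ[ℝ] l →ₗ[ℝ] l) (c : ℝ) (X Y : l) :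
    ricMap nab (c • X) Y = c • ricMap nab X Y := by
  ext Z; simp [ricMap_apply, curv, smul_sub]

lemma ricMap_add_right {l : Type*} [LieRing l] [LieAlgebra ℝ l]
    (nab : l →ₗ[ℝ] l →ₗ[ℝ] l) (X Y Y' : l) :
    ricMap nab X (Y + Y') = ricMap nab X Y + ricMap nab X Y' := by
  ext Z; simp [ricMap_apply, curv]; abel

lemma ricMap_smul_right {l : Type*} [LieRing l] [LieAlgebra ℝ l]
    (nab : l →ₗ[ℝ] l →ₗ[ℝ] l) (c : ℝ) (X Y : l) :
    ricMap nab X (c • Y) = c • ricMap nab X Y := by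
  ext Z; simp [ricMap_apply, curv, smul_sub]

def pBil {l : Type*} [LieRing l] [LieAlgebra ℝ l] [FiniteDimensional ℝ l]
    (nab : l →ₗ[ℝ] l →ₗ[ℝ] l) : l →ₗ[ℝ] l →ₗ[ℝ] ℝ :=
  LinearMap.mk₂ ℝ (pT nab)
    (fun X X' Y => by simp [pT, ric, ricMap_add_left, ricMap_add_right, map_add]; ring)
    (fun c X Y => by simp [pT, ric, ricMap_smul_left, ricMap_smul_right, map_smul]; ring)
    (fun X Y Y' => by simp [pT, ric, ricMap_add_left, ricMap_add_right, map_add]; ring)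
    (fun c X Y => by simp [pT, ric, ricMap_smul_left, ricMap_smul_right, map_smul]; ring)



/-- If `∇` is a torsion-free bilinear product on an `n`-dimensional real
Lie algebra `l` (`n ≥ 2`) with vanishing Weyl projective curvature, and `s ⊆ l` is an
autoparallel Lie subalgebra of dimension `m ≥ 2`, then the intrinsic Weyl projective
curvature of the restricted product on `s` also vanishes identically. -/
theorem weyl_of_autoparallel_subalgebra
    (l : Type*) [LieRing l] [LieAlgebra ℝ l]
    [FiniteDimensional ℝ l] (hn : 2 ≤ Module.finrank ℝ l)
    (nab : l →ₗ[ℝ] l →ₗ[ℝ] l)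
    (tf : ∀ X Y : l, nab X Y - nab Y X = ⁅X, Y⁆)
    (hW : ∀ X Y Z : l, weyl nab X Y Z = 0)
    (s : LieSubalgebra ℝ l) (hm : 2 ≤ Module.finrank ℝ s)
    (auto : ∀ X Y : l, X ∈ s → Y ∈ s → nab X Y ∈ s)
    (nabS : s →ₗ[ℝ] s →ₗ[ℝ] s)
    (hnabS : ∀ X Y : s, (nabS X Y : l) = nab X Y) :
    ∀ X Y Z : s, weyl nabS X Y Z = 0 := by
  intro X Y Z
  -- finite dimensionality of s
  haveI : FiniteDimensional ℝ s := inferInstance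
  set m : ℝ := (Module.finrank ℝ s : ℝ) with hmdef
  have hm2 : (2 : ℝ) ≤ m := by rw [hmdef]; exact_mod_cast hm
  have hmne : m ^ 2 - 1 ≠ 0 := by nlinarith
  -- curvature formula on l from vanishing Weyl
  have hR : ∀ A B C : l, curv nab A B C
      = pT nab B C • A - pT nab A C • B - (pT nab A B - pT nab B A) • C := by
    intro A B C
    have h := hW A B C
    rw [weyl] at h
    linear_combination (norm := module) h
  -- coercion of the restricted curvature
  have hcurv : ∀ A B C : s, ((curv nabS A B C : s) : l) = curv nab A B C := by
    intro A B C
    simp only [curv, AddSubgroupClass.coe_sub, hnabS, LieSubalgebra.coe_bracket]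
  -- the inclusion as a linear map
  set e : s →ₗ[ℝ] l := (s.incl : s →ₗ⁅ℝ⁆ l).toLinearMap with hedef
  have he : ∀ A : s, e A = (A : l) := fun A => rfl
  have hsmul : ∀ (c : ℝ) (A : s), ((c • A : s) : l) = c • (A : l) := fun _ _ => rfl
  have hpBil : ∀ A B : l, pBil nab A B = pT nab A B := fun _ _ => rfl
  -- the endomorphism equal to ricMap nabS X Y
  have key : ∀ X Y : s, ricMap nabS X Y
      = pT nab X Y • LinearMap.id
        - (((pBil nab).flip (Y : l)) ∘ₗ e).smulRight X
        - (((pBil nab).flip (X : l)) ∘ₗ e).smulRight Y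
        + ((pBil nab (X : l)) ∘ₗ e).smulRight Y := by
    intro X Y
    ext Z
    have h1 : ((ricMap nabS X Y Z : s) : l) = curv nab Z X Y := by
      rw [ricMap_apply, hcurv]
    rw [h1, hR]
    simp only [LinearMap.sub_apply, LinearMap.add_apply, LinearMap.smul_apply,
      LinearMap.id_apply, LinearMap.smulRight_apply, LinearMap.comp_apply,
      LinearMap.flip_apply, he]
    push_cast [hsmul, hpBil]
    module
  -- the restricted Ricci tensor
  have hric : ∀ X Y : s, ric nabS X Y
      = m * pT nab (X : l) (Y : l) - pT nab (Y : l) (X : l) := by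
    intro X Y
    rw [ric, key]
    rw [map_add, map_sub, map_sub, map_smul, LinearMap.trace_id,
      trace_smulRight, trace_smulRight, trace_smulRight]
    simp only [LinearMap.comp_apply, LinearMap.flip_apply, he]
    show pT nab ↑X ↑Y * m - pBil nab ↑X ↑Y - pBil nab ↑Y ↑X + pBil nab ↑X ↑Y
      = m * pT nab ↑X ↑Y - pT nab ↑Y ↑X
    show pT nab ↑X ↑Y * m - pT nab ↑X ↑Y - pT nab ↑Y ↑X + pT nab ↑X ↑Y
      = m * pT nab ↑X ↑Y - pT nab ↑Y ↑X
    ring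
  -- the restricted P tensor agrees with P
  have hpTS : ∀ X Y : s, pT nabS X Y = pT nab (X : l) (Y : l) := by
    intro X Y
    rw [pT, hric, hric, ← hmdef]
    field_simp
    ring
  -- conclude
  have h := hW (X : l) (Y : l) (Z : l)
  rw [weyl] at h
  have hcoe : ((weyl nabS X Y Z : s) : l)
      = curv nab (X:l) (Y:l) (Z:l) + (pT nab (X:l) (Y:l) - pT nab (Y:l) (X:l)) • (Z:l)
        - pT nab (Y:l) (Z:l) • (X:l) + pT nab (X:l) (Z:l) • (Y:l) := by
    rw [weyl]
    push_cast [hcurv, hpTS, hsmul]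
    module
  apply Subtype.ext
  rw [hcoe, h]
  rfl

end
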